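/- Let m be a regular multisegment and Δ a segment occurring in m. Then the three conditions LC(Δ, m), RC(Δ, m) and RC(Δ, m∖Δ) all hold if and only if Δ is preceded by no other segment of m and the multisegment consisting of Δ together with all segments of m that Δ precedes is a ladder. -/
import Mathlib


/-- A segment `[a;b]` is a pair of integers `a ≤ b`. -/
structure Segment where
  a : ℤ
  b : ℤ
  le : a ≤ b

namespace Segment

/-- `Δ ≺ Δ'` : the segment `Δ = [a;b]` precedes `Δ' = [c;d]`,
i.e. `a < c`, `c - 1 ≤ b` and `b < d`. -/
def prec (Δ Δ' : Segment) : Prop :=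
  Δ.a < Δ'.a ∧ Δ'.a - 1 ≤ Δ.b ∧ Δ.b < Δ'.b

/-- `←Δ = [a-1; b-1]`. -/
def shift (Δ : Segment) : Segment :=
  ⟨Δ.a - 1, Δ.b - 1, by have := Δ.le; omega⟩

instance (Δ Δ' : Segment) : Decidable (Δ.prec Δ') := by
  unfold prec; infer_instance

end Segment

/-- A multisegment (given as an indexed family of segments) is regular if the beginnings
of its segments are pairwise distinct and the ends of its segments are pairwise distinct. -/
def Regular {ι : Type*} (Δ : ι → Segment) : Prop :=
  (∀ i j : ι, (Δ i).a = (Δ j).a → i = j) ∧ (∀ i j : ι, (Δ i).b = (Δ j).b → i = j)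

/-- The condition `LC(Δ₀, m)` : there is an injective function
`f : X_{Δ₀,m} → Y_{Δ₀,m}` with `Δ_{f i} ≺ Δ_i` for all `i ∈ X_{Δ₀,m}`,
where `X_{Δ₀,m} = {i | Δ₀ ≺ Δ_i}` and `Y_{Δ₀,m} = {i | ←Δ₀ ≺ Δ_i}`. -/
def LC {ι : Type*} (Δ₀ : Segment) (Δ : ι → Segment) : Prop :=
  ∃ f : ι → ι, Set.InjOn f {i | Δ₀.prec (Δ i)} ∧
    ∀ i : ι, Δ₀.prec (Δ i) → Δ₀.shift.prec (Δ (f i)) ∧ (Δ (f i)).prec (Δ i)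

/-- The condition `RC(Δ₀, m)` : there is an injective function
`f : X̃_{Δ₀,m} → Ỹ_{Δ₀,m}` with `Δ_i ≺ Δ_{f i}` for all `i ∈ X̃_{Δ₀,m}`,
where `X̃_{Δ₀,m} = {i | Δ_i ≺ Δ₀}` and `Ỹ_{Δ₀,m} = {i | ←Δ_i ≺ Δ₀}`. -/
def RC {ι : Type*} (Δ₀ : Segment) (Δ : ι → Segment) : Prop :=
  ∃ f : ι → ι, Set.InjOn f {i | (Δ i).prec Δ₀} ∧
    ∀ i : ι, (Δ i).prec Δ₀ → (Δ (f i)).shift.prec Δ₀ ∧ (Δ i).prec (Δ (f i))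

/-- The sub-multisegment of `Δ` indexed by the finite set `S` is a ladder: its segments can
be enumerated so that both the beginnings and the ends are strictly decreasing. -/
def IsLadder {ι : Type*} (Δ : ι → Segment) (S : Finset ι) : Prop :=
  ∃ e : Fin S.card ≃ {x // x ∈ S}, ∀ k l : Fin S.card, k < l →
    (Δ (e l).val).a < (Δ (e k).val).a ∧ (Δ (e l).val).b < (Δ (e k).val).b

namespace S5Aux

def Pw {N : ℕ} (Δ : Fin N → Segment) (S : Finset (Fin N)) : Prop :=
  ∀ j ∈ S, ∀ k ∈ S, (Δ k).b < (Δ j).b → (Δ k).a < (Δ j).a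

lemma ladder_of_pw {N : ℕ} (Δ : Fin N → Segment) (hreg : Regular Δ) (S : Finset (Fin N))
    (h : Pw Δ S) : IsLadder Δ S := by
  classical
  have hbinj : Function.Injective (fun i : Fin N => (Δ i).b) := fun i j hij => hreg.2 i j hij
  set B : Finset ℤ := S.image (fun i => (Δ i).b) with hBdef
  have hcard : B.card = S.card := Finset.card_image_of_injective _ hbinj
  let o : Fin S.card ≃o {y // y ∈ B} := B.orderIsoOfFin hcard
  let ψ : {x // x ∈ S} → {y // y ∈ B} := fun x => ⟨(Δ x.val).b, Finset.mem_image_of_mem _ x.2⟩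
  have hψ : Function.Bijective ψ := by
    constructor
    · intro x y hxy
      exact Subtype.ext (hbinj (congrArg Subtype.val hxy))
    · rintro ⟨y, hy⟩
      obtain ⟨i, hi, rfl⟩ := Finset.mem_image.mp hy
      exact ⟨⟨i, hi⟩, rfl⟩
  let ψe := Equiv.ofBijective ψ hψ
  refine ⟨Fin.revPerm.trans (o.toEquiv.trans ψe.symm), ?_⟩
  have key : ∀ k : Fin S.card,
      (Δ (((Fin.revPerm.trans (o.toEquiv.trans ψe.symm)) k).val)).b = (o k.rev).val := by
    intro k
    have h2 := ψe.apply_symm_apply (o k.rev)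
    exact congrArg Subtype.val h2
  intro k l hkl
  have hrev : l.rev < k.rev := Fin.rev_lt_rev.mpr hkl
  have hb : (o l.rev : ℤ) < (o k.rev : ℤ) := by
    exact_mod_cast (o.lt_iff_lt.mpr hrev)
  rw [← key k, ← key l] at hb
  set e := Fin.revPerm.trans (o.toEquiv.trans ψe.symm)
  exact ⟨h _ (e k).2 _ (e l).2 hb, hb⟩

lemma pw_of_ladder {N : ℕ} (Δ : Fin N → Segment) (S : Finset (Fin N))
    (h : IsLadder Δ S) : Pw Δ S := by
  obtain ⟨e, he⟩ := h
  intro j hj k hk hbk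
  set kk := e.symm ⟨k, hk⟩ with hkk
  set jj := e.symm ⟨j, hj⟩ with hjj
  have hek : e kk = ⟨k, hk⟩ := e.apply_symm_apply _
  have hej : e jj = ⟨j, hj⟩ := e.apply_symm_apply _
  rcases lt_trichotomy kk jj with hlt | heq | hgt
  · have h2 := (he kk jj hlt).2
    rw [hek, hej] at h2
    have h3 : (Δ j).b < (Δ k).b := h2
    omega
  · have h3 : (⟨k, hk⟩ : {x // x ∈ S}) = ⟨j, hj⟩ := by rw [← hek, ← hej, heq]
    have h4 : k = j := Subtype.mk_eq_mk.mp h3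
    subst h4
    omega
  · have h2 := (he jj kk hgt).1
    rw [hek, hej] at h2
    exact h2


lemma keyQ {N : ℕ} (Δ : Fin N → Segment) (hreg : Regular Δ) (i₀ : Fin N)
    (f : Fin N → Fin N)
    (hinjOn : Set.InjOn f {i | (Δ i₀).prec (Δ i)})
    (hf : ∀ i, (Δ i₀).prec (Δ i) → (Δ i₀).shift.prec (Δ (f i)) ∧ (Δ (f i)).prec (Δ i)) :
    Pw Δ (insert i₀ (Finset.univ.filter fun i => (Δ i₀).prec (Δ i))) := by
  classical
  set Xf := (Finset.univ.filter fun i => (Δ i₀).prec (Δ i)) with hXf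
  have hmemXf : ∀ i, i ∈ Xf ↔ (Δ i₀).prec (Δ i) := by intro i; simp [hXf]
  have hi₀Xf : i₀ ∉ Xf := by simp [hXf, Segment.prec]
  have hmemS : ∀ i, i ∈ insert i₀ Xf ↔ i = i₀ ∨ (Δ i₀).prec (Δ i) := by
    intro i; simp [hmemXf]
  have hbS : ∀ k ∈ insert i₀ Xf, (Δ i₀).b ≤ (Δ k).b := by
    intro k hk
    rcases (hmemS k).1 hk with rfl | h
    · exact le_rfl
    · exact le_of_lt h.2.2
  have hfS : ∀ i, (Δ i₀).prec (Δ i) → f i ∈ insert i₀ Xf ∧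
      (Δ (f i)).b < (Δ i).b ∧ (Δ (f i)).a < (Δ i).a := by
    intro i hi
    obtain ⟨h1, h2⟩ := hf i hi
    have h1' : (Δ i₀).a - 1 < (Δ (f i)).a ∧ (Δ (f i)).a - 1 ≤ (Δ i₀).b - 1 ∧
        (Δ i₀).b - 1 < (Δ (f i)).b := h1
    refine ⟨?_, h2.2.2, h2.1⟩
    by_cases hb : (Δ (f i)).b = (Δ i₀).b
    · have : f i = i₀ := hreg.2 _ _ hb
      rw [this]; exact Finset.mem_insert_self _ _
    · have hblt : (Δ i₀).b < (Δ (f i)).b := by omega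
      have halt : (Δ i₀).a < (Δ (f i)).a := by
        rcases lt_or_eq_of_le (by omega : (Δ i₀).a ≤ (Δ (f i)).a) with h | h
        · exact h
        · exact absurd ((hreg.1 _ _ h.symm) ▸ hb) (by simp)
      exact (hmemS (f i)).2 (Or.inr ⟨halt, by omega, hblt⟩)
  suffices H : ∀ d : ℕ, ∀ j ∈ insert i₀ Xf, ((Δ j).b - (Δ i₀).b).toNat ≤ d →
      ∀ k ∈ insert i₀ Xf, (Δ k).b < (Δ j).b → (Δ k).a < (Δ j).a by
    intro j hj k hk hbk
    exact H ((Δ j).b - (Δ i₀).b).toNat j hj le_rfl k hk hbk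
  intro d
  induction d with
  | zero =>
    intro j hj hd k hk hbk
    have h1 := hbS j hj
    have h2 := hbS k hk
    omega
  | succ d ih =>
    intro j hj hd k hk hbk
    have hbj := hbS j hj
    have hbk0 := hbS k hk
    have hjX : (Δ i₀).prec (Δ j) := by
      rcases (hmemS j).1 hj with rfl | h
      · omega
      · exact h
    obtain ⟨hfjS, hfjb, hfja⟩ := hfS j hjX
    have hfjb0 := hbS _ hfjS
    rcases lt_trichotomy (Δ k).b (Δ (f j)).b with hlt | heq | hgt
    · have hafj : (Δ k).a < (Δ (f j)).a := ih (f j) hfjS (by omega) k hk hlt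
      omega
    · have hkfj : k = f j := hreg.2 k (f j) heq
      rw [hkfj]; exact hfja
    · exfalso
      have hkX : (Δ i₀).prec (Δ k) := by
        rcases (hmemS k).1 hk with rfl | h
        · omega
        · exact h
      set D := insert j (Xf.filter fun m => (Δ m).b ≤ (Δ k).b) with hD
      set T := insert i₀ (Xf.filter fun m => (Δ m).b < (Δ k).b) with hT
      have hDsub : (D : Set (Fin N)) ⊆ {i | (Δ i₀).prec (Δ i)} := by
        intro x hx
        rcases Finset.mem_insert.mp hx with rfl | hx'
        · exact hjX
        · exact (hmemXf x).1 (Finset.mem_of_mem_filter _ hx')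
      have hmaps : ∀ m ∈ D, f m ∈ T := by
        intro m hm
        have hmprec : (Δ i₀).prec (Δ m) := hDsub hm
        obtain ⟨hfmS, hfmb, _⟩ := hfS m hmprec
        have hfmb' : (Δ (f m)).b < (Δ k).b := by
          rcases Finset.mem_insert.mp hm with rfl | hm'
          · omega
          · have := (Finset.mem_filter.mp hm').2; omega
        rcases Finset.mem_insert.mp hfmS with hfm | hfm
        · rw [hfm]; exact Finset.mem_insert_self _ _
        · exact Finset.mem_insert_of_mem (Finset.mem_filter.mpr ⟨hfm, hfmb'⟩)
      have hcardle : D.card ≤ T.card :=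
        Finset.card_le_card_of_injOn f hmaps (hinjOn.mono hDsub)
      have hjD : j ∉ Xf.filter fun m => (Δ m).b ≤ (Δ k).b := by
        intro hcon
        have := (Finset.mem_filter.mp hcon).2; omega
      have hcardD : D.card = (Xf.filter fun m => (Δ m).b ≤ (Δ k).b).card + 1 :=
        Finset.card_insert_of_notMem hjD
      have hi₀T : i₀ ∉ Xf.filter fun m => (Δ m).b < (Δ k).b := by
        intro hcon
        exact hi₀Xf (Finset.mem_of_mem_filter _ hcon)
      have hcardT : T.card = (Xf.filter fun m => (Δ m).b < (Δ k).b).card + 1 :=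
        Finset.card_insert_of_notMem hi₀T
      have hsplit : (Xf.filter fun m => (Δ m).b ≤ (Δ k).b) =
          insert k (Xf.filter fun m => (Δ m).b < (Δ k).b) := by
        ext m
        simp only [Finset.mem_filter, Finset.mem_insert]
        constructor
        · rintro ⟨hmX, hmb⟩
          rcases lt_or_eq_of_le hmb with h | h
          · exact Or.inr ⟨hmX, h⟩
          · exact Or.inl (hreg.2 m k h)
        · rintro (rfl | ⟨hmX, hmb⟩)
          · exact ⟨(hmemXf m).2 hkX, le_rfl⟩
          · exact ⟨hmX, le_of_lt hmb⟩
      have hkfil : k ∉ Xf.filter fun m => (Δ m).b < (Δ k).b := by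
        intro hcon
        have := (Finset.mem_filter.mp hcon).2; omega
      have hcards : (Xf.filter fun m => (Δ m).b ≤ (Δ k).b).card =
          (Xf.filter fun m => (Δ m).b < (Δ k).b).card + 1 := by
        rw [hsplit, Finset.card_insert_of_notMem hkfil]
      omega


end S5Aux

open S5Aux in
theorem statement5 {N : ℕ} (Δ : Fin N → Segment) (hreg : Regular Δ) (i₀ : Fin N) :
    (LC (Δ i₀) Δ ∧ RC (Δ i₀) Δ ∧
        RC (Δ i₀) (fun i : {i : Fin N // i ≠ i₀} => Δ i.val)) ↔
    ((∀ i : Fin N, i ≠ i₀ → ¬ (Δ i).prec (Δ i₀)) ∧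
      IsLadder Δ (insert i₀ (Finset.univ.filter fun i => (Δ i₀).prec (Δ i)))) := by
  classical
  constructor
  · rintro ⟨⟨fL, hLinj, hLf⟩, -, ⟨g, hginj, hg⟩⟩
    constructor
    · -- no other segment precedes Δ i₀, from RC on m ∖ Δ i₀
      intro i hi hprec
      have hne : (Finset.univ.filter fun x : {i : Fin N // i ≠ i₀} =>
          (Δ x.val).prec (Δ i₀)).Nonempty := ⟨⟨i, hi⟩, by simp [hprec]⟩
      obtain ⟨x, hxmem, hxmax⟩ := Finset.exists_max_image _ (fun x => (Δ x.val).b) hne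
      have hx : (Δ x.val).prec (Δ i₀) := by simpa using hxmem
      obtain ⟨hs, hp⟩ := hg x hx
      have hs' : (Δ (g x).val).a - 1 < (Δ i₀).a ∧ (Δ i₀).a - 1 ≤ (Δ (g x).val).b - 1 ∧
          (Δ (g x).val).b - 1 < (Δ i₀).b := hs
      have hane : (Δ (g x).val).a ≠ (Δ i₀).a := fun h => (g x).2 (hreg.1 _ _ h)
      have hbne : (Δ (g x).val).b ≠ (Δ i₀).b := fun h => (g x).2 (hreg.2 _ _ h)
      have hgprec : (Δ (g x).val).prec (Δ i₀) := ⟨by omega, by omega, by omega⟩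
      have hmem2 : g x ∈ Finset.univ.filter fun x : {i : Fin N // i ≠ i₀} =>
          (Δ x.val).prec (Δ i₀) := by simp [hgprec]
      have hle := hxmax (g x) hmem2
      have hlt : (Δ x.val).b < (Δ (g x).val).b := hp.2.2
      omega
    · exact ladder_of_pw Δ hreg _ (keyQ Δ hreg i₀ fL hLinj hLf)
  · rintro ⟨h1, hlad⟩
    have pw := pw_of_ladder Δ _ hlad
    have hmemS : ∀ i, i ∈ insert i₀ (Finset.univ.filter fun i => (Δ i₀).prec (Δ i)) ↔
        i = i₀ ∨ (Δ i₀).prec (Δ i) := by intro i; simp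
    have hbS : ∀ k ∈ insert i₀ (Finset.univ.filter fun i => (Δ i₀).prec (Δ i)),
        (Δ i₀).b ≤ (Δ k).b := by
      intro k hk
      rcases (hmemS k).1 hk with rfl | h
      · exact le_rfl
      · exact le_of_lt h.2.2
    have hnoprec : ∀ i, ¬ (Δ i).prec (Δ i₀) := by
      intro i hp
      by_cases h : i = i₀
      · subst h; exact absurd hp.1 (lt_irrefl _)
      · exact h1 i h hp
    refine ⟨?_, ⟨id, Set.injOn_id _, fun i hp => absurd hp (hnoprec i)⟩,
      ⟨id, Set.injOn_id _, fun i hp => absurd hp (hnoprec i.val)⟩⟩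
    -- construct LC
    have hcand : ∀ i, (Δ i₀).prec (Δ i) →
        ((insert i₀ (Finset.univ.filter fun m => (Δ i₀).prec (Δ m))).filter
          fun m => (Δ m).b < (Δ i).b).Nonempty := by
      intro i hi
      exact ⟨i₀, Finset.mem_filter.mpr ⟨Finset.mem_insert_self _ _, hi.2.2⟩⟩
    choose g' hg1 hg2 using fun i hi => Finset.exists_max_image _ (fun m => (Δ m).b) (hcand i hi)
    set f : Fin N → Fin N := fun i =>
      if h : (Δ i₀).prec (Δ i) then g' i h else i with hfdef
    have hfprop : ∀ i (hi : (Δ i₀).prec (Δ i)),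
        f i ∈ insert i₀ (Finset.univ.filter fun m => (Δ i₀).prec (Δ m)) ∧
        (Δ (f i)).b < (Δ i).b ∧
        ∀ m ∈ insert i₀ (Finset.univ.filter fun m => (Δ i₀).prec (Δ m)),
          (Δ m).b < (Δ i).b → (Δ m).b ≤ (Δ (f i)).b := by
      intro i hi
      have hf1 : f i = g' i hi := dif_pos hi
      rw [hf1]
      obtain ⟨hmem, hb⟩ := Finset.mem_filter.mp (hg1 i hi)
      exact ⟨hmem, hb, fun m hm hmb => hg2 i hi m (Finset.mem_filter.mpr ⟨hm, hmb⟩)⟩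
    refine ⟨f, ?_, ?_⟩
    · -- injectivity
      intro x hx y hy heq
      have hx' : (Δ i₀).prec (Δ x) := hx
      have hy' : (Δ i₀).prec (Δ y) := hy
      obtain ⟨hxS, hxb, hxmax⟩ := hfprop x hx'
      obtain ⟨hyS, hyb, hymax⟩ := hfprop y hy'
      rcases lt_trichotomy (Δ x).b (Δ y).b with hlt | heqb | hgt
      · exfalso
        have hxmem : x ∈ insert i₀ (Finset.univ.filter fun m => (Δ i₀).prec (Δ m)) :=
          (hmemS x).2 (Or.inr hx')
        have h5 := hymax x hxmem hlt
        have hbeq : (Δ (f x)).b = (Δ (f y)).b := by rw [heq]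
        omega
      · exact hreg.2 x y heqb
      · exfalso
        have hymem : y ∈ insert i₀ (Finset.univ.filter fun m => (Δ i₀).prec (Δ m)) :=
          (hmemS y).2 (Or.inr hy')
        have h5 := hxmax y hymem hgt
        have hbeq : (Δ (f x)).b = (Δ (f y)).b := by rw [heq]
        omega
    · -- conditions
      intro i hi
      obtain ⟨hi1, hi2, hi3⟩ := id hi
      obtain ⟨hfS, hfb, hfmax⟩ := hfprop i hi
      have hiS : i ∈ insert i₀ (Finset.univ.filter fun m => (Δ i₀).prec (Δ m)) :=
        (hmemS i).2 (Or.inr hi)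
      have hfa : (Δ (f i)).a < (Δ i).a := pw i hiS (f i) hfS hfb
      have hfb0 : (Δ i₀).b ≤ (Δ (f i)).b := hbS _ hfS
      have hfaup : (Δ (f i)).a ≤ (Δ i₀).b := by
        rcases (hmemS (f i)).1 hfS with hfi | hfi
        · rw [hfi]; exact (Δ i₀).le
        · -- f i ∈ Xf : a_{f i} ≤ b₀ + 1; exclude equality
          have h2 := hfi.2.1
          have h3 := hi.2.1
          omega
      have hfa0 : (Δ i₀).a ≤ (Δ (f i)).a := by
        rcases (hmemS (f i)).1 hfS with hfi | hfi
        · rw [hfi]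
        · exact le_of_lt hfi.1
      have hsa : (Δ i₀).shift.a = (Δ i₀).a - 1 := rfl
      have hsb : (Δ i₀).shift.b = (Δ i₀).b - 1 := rfl
      constructor
      · exact ⟨by omega, by omega, by omega⟩
      · exact ⟨hfa, by omega, hfb⟩
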